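/- arXiv:0710.0193 — 2 statements merged into one kernel-verified Lean document; each statement's English description precedes it below -/
import Mathlib

section
/- Let {μ_u : u ∈ K₂} be a K₂-parameter convolution semigroup on ℝ^d and {ρ_s : s ∈ K₁} a K₁-parameter convolution semigroup on ℝ^{N₂} supported on K₂. Define σ_s(B) = ∫_{K₂} μ_u(B) ρ_s(du) for Borel sets B ⊆ ℝ^d. Then {σ_s : s ∈ K₁} is a K₁-parameter convolution semigroup on ℝ^d. -/
open MeasureTheory Filter Set
open scoped Topology Pointwise ENNReal NNReal BoundedContinuousFunction

noncomputable section

/-- Euclidean space ℝ^n. -/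
abbrev Euc (n : ℕ) := EuclideanSpace ℝ (Fin n)

section Defs

variable {F G : Type*} [NormedAddCommGroup F] [InnerProductSpace ℝ F]
  [MeasurableSpace F] [BorelSpace F]

/-- Convolution of two measures. -/
def mconv (μ ν : Measure F) : Measure F := (μ.prod ν).map (fun p => p.1 + p.2)

/-- n-fold convolution power. -/
def nconv (μ : Measure F) : ℕ → Measure F
  | 0 => Measure.dirac 0
  | k + 1 => mconv μ (nconv μ k)

/-- Characteristic function of a measure. -/
def charFn (μ : Measure F) (z : F) : ℂ :=
  ∫ x, Complex.exp (Complex.I * ((inner ℝ z x : ℝ) : ℂ)) ∂μ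

/-- Infinitely divisible distribution. -/
def IsID (μ : Measure F) : Prop :=
  ∀ k : ℕ, 1 ≤ k → ∃ ν : Measure F, IsProbabilityMeasure ν ∧ nconv ν k = μ

/-- Selfdecomposable distribution. -/
def IsSelfdecomp (μ : Measure F) : Prop :=
  ∀ b : ℝ, 1 < b → ∃ ν : Measure F, IsProbabilityMeasure ν ∧
    ∀ z, charFn μ z = charFn μ (b⁻¹ • z) * charFn ν z

/-- The nested classes `L_m(b⁻¹)`: `InL 0 b μ` is semi-selfdecomposability with span `b`
(the cofactor is infinitely divisible), and `InL (m+1) b μ` requires a cofactor in `L_m`. -/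
def InL : ℕ → ℝ → Measure F → Prop
  | 0, b, μ => ∃ ν : Measure F, IsProbabilityMeasure ν ∧ IsID ν ∧
      ∀ z, charFn μ z = charFn μ (b⁻¹ • z) * charFn ν z
  | m + 1, b, μ => ∃ ν : Measure F, IsProbabilityMeasure ν ∧ IsID ν ∧
      (∀ z, charFn μ z = charFn μ (b⁻¹ • z) * charFn ν z) ∧ InL m b ν

/-- A cone: nonempty closed convex set, closed under multiplication by nonnegative reals,
containing no straight line through 0, and not equal to {0}. -/
def IsCone (K : Set F) : Prop :=
  K.Nonempty ∧ IsClosed K ∧ Convex ℝ K ∧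
  (∀ c : ℝ, 0 ≤ c → ∀ x ∈ K, c • x ∈ K) ∧
  (∀ x ∈ K, x ≠ 0 → -x ∉ K) ∧ K ≠ {0}

/-- A `K`-parameter convolution semigroup: probability measures satisfying
`μ s₁ * μ s₂ = μ (s₁ + s₂)` and `μ (t • s) → δ₀` weakly as `t ↓ 0`. -/
def IsConvSemigroup [NormedAddCommGroup G] [InnerProductSpace ℝ G]
    [MeasurableSpace G] [BorelSpace G] (K : Set F) (μ : F → Measure G) : Prop :=
  (∀ s ∈ K, IsProbabilityMeasure (μ s)) ∧
  (∀ s₁ ∈ K, ∀ s₂ ∈ K, mconv (μ s₁) (μ s₂) = μ (s₁ + s₂)) ∧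
  (∀ s ∈ K, ∀ f : G →ᵇ ℝ,
    Tendsto (fun t : ℝ => ∫ x, f x ∂(μ (t • s))) (𝓝[>] (0 : ℝ)) (𝓝 (f 0)))

/-- Strictly α-semistable with span `b`: infinitely divisible with
`charFn μ z ^ (b^α) = charFn μ (b • z)`. -/
def IsStrictSemistable (α b : ℝ) (μ : Measure F) : Prop :=
  IsID μ ∧ ∀ z, charFn μ z ^ (((b ^ α : ℝ) : ℂ)) = charFn μ (b • z)

end Defs

section Helpers

variable {n : ℕ}

lemma cone_zero_mem {m : ℕ} {K : Set (Euc m)} (hK : IsCone K) : (0 : Euc m) ∈ K := by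
  obtain ⟨x, hx⟩ := hK.1
  have := hK.2.2.2.1 0 le_rfl x hx
  simpa using this

lemma cone_add_mem {m : ℕ} {K : Set (Euc m)} (hK : IsCone K) {u v : Euc m}
    (hu : u ∈ K) (hv : v ∈ K) : u + v ∈ K := by
  have h := hK.2.2.1 hu hv (by norm_num : (0:ℝ) ≤ 1/2) (by norm_num : (0:ℝ) ≤ 1/2) (by norm_num)
  have h2 := hK.2.2.2.1 2 (by norm_num) _ h
  have : (2:ℝ) • ((1/2 : ℝ) • u + (1/2 : ℝ) • v) = u + v := by
    rw [smul_add, smul_smul, smul_smul]; norm_num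
  rwa [this] at h2

lemma cone_smul_mem {m : ℕ} {K : Set (Euc m)} (hK : IsCone K) {c : ℝ} (hc : 0 ≤ c)
    {u : Euc m} (hu : u ∈ K) : c • u ∈ K := hK.2.2.2.1 c hc u hu

lemma tail_measurable (r : ℝ) : MeasurableSet {x : Euc n | r < ‖x‖} :=
  (isOpen_lt continuous_const continuous_norm).measurableSet

/-- tail of a convolution is bounded by the sum of the tails. -/
lemma tail_mconv_le (α β : Measure (Euc n)) [IsProbabilityMeasure α] [IsProbabilityMeasure β]
    (r : ℝ) :
    mconv α β {x | r < ‖x‖} ≤ α {x | r/2 < ‖x‖} + β {x | r/2 < ‖x‖} := by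
  rw [mconv, Measure.map_apply measurable_add (tail_measurable r)]
  have hsub : ((fun p : Euc n × Euc n => p.1 + p.2) ⁻¹' {x | r < ‖x‖}) ⊆
      ({x : Euc n | r/2 < ‖x‖} ×ˢ (Set.univ : Set (Euc n))) ∪
      ((Set.univ : Set (Euc n)) ×ˢ {x : Euc n | r/2 < ‖x‖}) := by
    rintro ⟨x, y⟩ h
    simp only [Set.mem_preimage, Set.mem_setOf_eq] at h
    by_contra hc
    simp only [Set.mem_union, Set.mem_prod, Set.mem_univ, Set.mem_setOf_eq, and_true,
      true_and, not_or, not_lt] at hc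
    have := norm_add_le x y
    linarith
  calc (α.prod β) ((fun p : Euc n × Euc n => p.1 + p.2) ⁻¹' {x | r < ‖x‖})
      ≤ (α.prod β) (({x : Euc n | r/2 < ‖x‖} ×ˢ Set.univ) ∪
        (Set.univ ×ˢ {x : Euc n | r/2 < ‖x‖})) := measure_mono hsub
    _ ≤ (α.prod β) ({x : Euc n | r/2 < ‖x‖} ×ˢ Set.univ) +
        (α.prod β) (Set.univ ×ˢ {x : Euc n | r/2 < ‖x‖}) := measure_union_le _ _
    _ = α {x | r/2 < ‖x‖} + β {x | r/2 < ‖x‖} := by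
        rw [Measure.prod_prod, Measure.prod_prod, measure_univ, measure_univ, mul_one, one_mul]

/-- tail of a convolution factor is bounded by tails of the convolution and the other factor. -/
lemma tail_factor_le (α β : Measure (Euc n)) [IsProbabilityMeasure α] [IsProbabilityMeasure β]
    (r : ℝ) :
    α {x | r < ‖x‖} ≤ mconv α β {x | r/2 < ‖x‖} + β {x | r/2 < ‖x‖} := by
  have key : α {x | r < ‖x‖} = (α.prod β) ({x : Euc n | r < ‖x‖} ×ˢ Set.univ) := by
    rw [Measure.prod_prod, measure_univ, mul_one]
  rw [key, mconv, Measure.map_apply measurable_add (tail_measurable (r/2))]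
  have hsub : ({x : Euc n | r < ‖x‖} ×ˢ (Set.univ : Set (Euc n))) ⊆
      ((fun p : Euc n × Euc n => p.1 + p.2) ⁻¹' {x | r/2 < ‖x‖}) ∪
      ((Set.univ : Set (Euc n)) ×ˢ {x : Euc n | r/2 < ‖x‖}) := by
    rintro ⟨x, y⟩ h
    simp only [Set.mem_prod, Set.mem_setOf_eq, Set.mem_univ, and_true] at h
    by_cases hy : r/2 < ‖y‖
    · exact Or.inr (by simp [hy])
    · push_neg at hy
      left
      simp only [Set.mem_preimage, Set.mem_setOf_eq]
      have : ‖x‖ ≤ ‖x + y‖ + ‖y‖ := by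
        simpa [add_sub_cancel_right] using norm_sub_le (x + y) y
      linarith
  calc (α.prod β) ({x : Euc n | r < ‖x‖} ×ˢ Set.univ)
      ≤ (α.prod β) (((fun p : Euc n × Euc n => p.1 + p.2) ⁻¹' {x | r/2 < ‖x‖}) ∪
        (Set.univ ×ˢ {x : Euc n | r/2 < ‖x‖})) := measure_mono hsub
    _ ≤ (α.prod β) ((fun p : Euc n × Euc n => p.1 + p.2) ⁻¹' {x | r/2 < ‖x‖}) +
        (α.prod β) (Set.univ ×ˢ {x : Euc n | r/2 < ‖x‖}) := measure_union_le _ _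
    _ = _ := by rw [Measure.prod_prod, measure_univ, one_mul]

end Helpers
section Helpers2

variable {n : ℕ}

/-- A continuous bump which vanishes at 0 and equals 1 outside the ball of radius r. -/
def bumpFn (r : ℝ) : Euc n →ᵇ ℝ :=
  BoundedContinuousFunction.mkOfBound
    ⟨fun x => min 1 (max 0 (2 * ‖x‖ / r - 1)), by
      apply continuous_const.min
      exact continuous_const.max (((continuous_const.mul continuous_norm).div_const r).sub
        continuous_const)⟩ 1
    (by
      intro x y
      simp only [ContinuousMap.coe_mk]
      have h1 : ∀ z : Euc n, 0 ≤ min 1 (max 0 (2 * ‖z‖ / r - 1)) :=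
        fun z => le_min zero_le_one (le_max_left _ _)
      have h2 : ∀ z : Euc n, min 1 (max 0 (2 * ‖z‖ / r - 1)) ≤ 1 := fun z => min_le_left _ _
      rw [Real.dist_eq, abs_sub_le_iff]
      constructor <;> linarith [h1 x, h2 x, h1 y, h2 y])

lemma bumpFn_zero (r : ℝ) (hr : 0 < r) : bumpFn (n := n) r 0 = 0 := by
  show min 1 (max 0 (2 * ‖(0 : Euc n)‖ / r - 1)) = 0
  rw [norm_zero]
  have : 2 * (0:ℝ) / r - 1 = -1 := by simp
  rw [this]
  norm_num

lemma bumpFn_indicator_le (r : ℝ) (hr : 0 < r) (x : Euc n) :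
    Set.indicator {y : Euc n | r < ‖y‖} (fun _ => (1:ℝ)) x ≤ bumpFn r x := by
  show _ ≤ min 1 (max 0 (2 * ‖x‖ / r - 1))
  by_cases hx : x ∈ {y : Euc n | r < ‖y‖}
  · rw [Set.indicator_of_mem hx]
    refine le_min le_rfl (le_max_of_le_right ?_)
    rw [Set.mem_setOf_eq] at hx
    rw [le_sub_iff_add_le, le_div_iff₀ hr]
    nlinarith
  · rw [Set.indicator_of_notMem hx]
    exact le_min zero_le_one (le_max_left _ _)

/-- From weak convergence to δ₀ (tested on bounded continuous functions), deduce that tails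
vanish. -/
lemma tail_tendsto_of_conv {ι : Type*} {l : Filter ι} (ν : ι → Measure (Euc n))
    (hprob : ∀ᶠ i in l, IsProbabilityMeasure (ν i))
    (hconv : ∀ f : Euc n →ᵇ ℝ, Tendsto (fun i => ∫ x, f x ∂ν i) l (𝓝 (f 0)))
    {r : ℝ} (hr : 0 < r) :
    Tendsto (fun i => ν i {x | r < ‖x‖}) l (𝓝 0) := by
  have key : ∀ᶠ i in l, ν i {x | r < ‖x‖} ≤ ENNReal.ofReal (∫ x, bumpFn r x ∂ν i) := by
    filter_upwards [hprob] with i hi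
    have h1 : (ν i {x | r < ‖x‖}).toReal ≤ ∫ x, bumpFn r x ∂ν i := by
      have : (ν i {x | r < ‖x‖}).toReal = ∫ x, Set.indicator {y : Euc n | r < ‖y‖}
          (fun _ => (1:ℝ)) x ∂ν i := by
        rw [MeasureTheory.integral_indicator_const _ (tail_measurable r)]
        simp [measureReal_def]
      rw [this]
      apply integral_mono _ ((bumpFn r).integrable (ν i)) (bumpFn_indicator_le r hr)
      exact (integrable_const (1:ℝ)).indicator (tail_measurable r)
    rw [ENNReal.le_ofReal_iff_toReal_le (measure_ne_top _ _) ]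
    · exact h1
    · exact le_trans (by positivity) h1
  have hup : Tendsto (fun i => ENNReal.ofReal (∫ x, bumpFn r x ∂ν i)) l (𝓝 0) := by
    have := hconv (bumpFn r)
    rw [bumpFn_zero r hr] at this
    have := (ENNReal.continuous_ofReal.tendsto 0).comp this
    simpa [Function.comp_def] using this
  exact tendsto_of_tendsto_of_tendsto_of_le_of_le' tendsto_const_nhds hup
    (Eventually.of_forall fun i => zero_le) key

/-- tails vanishing + boundedness + continuity at 0 gives convergence of integrals. -/
lemma integral_tendsto_of_tails {ι : Type*} {l : Filter ι} (ν : ι → Measure (Euc n))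
    (hprob : ∀ᶠ i in l, IsProbabilityMeasure (ν i))
    (htail : ∀ r : ℝ, 0 < r → Tendsto (fun i => ν i {x | r < ‖x‖}) l (𝓝 0))
    (H : Euc n → ℝ) (hm : Measurable H) (M : ℝ) (hb : ∀ x, |H x| ≤ M)
    (hc : ∀ ε : ℝ, 0 < ε → ∃ δ : ℝ, 0 < δ ∧ ∀ x : Euc n, ‖x‖ < δ → |H x - H 0| < ε) :
    Tendsto (fun i => ∫ x, H x ∂ν i) l (𝓝 (H 0)) := by
  have hM0 : 0 ≤ M := le_trans (abs_nonneg _) (hb 0)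
  rw [Metric.tendsto_nhds]
  intro ε hε
  obtain ⟨δ, hδ, hδ'⟩ := hc (ε/2) (by positivity)
  set S : Set (Euc n) := {x | δ/2 < ‖x‖} with hS
  have hSm : MeasurableSet S := tail_measurable _
  have htt : Tendsto (fun i => (ν i S).toReal) l (𝓝 0) := by
    have := (ENNReal.tendsto_toReal (by simp : (0:ℝ≥0∞) ≠ ⊤)).comp (htail (δ/2) (by positivity))
    simpa [Function.comp_def] using this
  have hsmall : ∀ᶠ i in l, (ν i S).toReal < ε / (2 * (2*M+1)) := by
    have hpos : (0:ℝ) < ε / (2 * (2*M+1)) := by positivity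
    exact htt.eventually (eventually_lt_nhds hpos) |>.mono (fun i h => by simpa using h)
  filter_upwards [hprob, hsmall] with i hi hsm
  haveI := hi
  have hHint : Integrable H (ν i) := by
    refine (integrable_const M).mono' hm.aestronglyMeasurable ?_
    exact Eventually.of_forall fun x => by simpa using hb x
  have hint2 : Integrable (fun x => |H x - H 0|) (ν i) :=
    (hHint.sub (integrable_const (H 0))).abs
  have e1 : ∫ x, H x ∂ν i - H 0 = ∫ x, (H x - H 0) ∂ν i := by
    rw [integral_sub hHint (integrable_const _), integral_const]
    simp
  rw [Real.dist_eq, e1]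
  have e2 : |∫ x, (H x - H 0) ∂ν i| ≤ ∫ x, |H x - H 0| ∂ν i := by
    simpa using norm_integral_le_integral_norm (μ := ν i) (f := fun x => H x - H 0)
  have e3 : ∫ x, |H x - H 0| ∂ν i = (∫ x in S, |H x - H 0| ∂ν i)
      + ∫ x in Sᶜ, |H x - H 0| ∂ν i := (integral_add_compl hSm hint2).symm
  have e4 : ∫ x in S, |H x - H 0| ∂ν i ≤ (2*M) * (ν i S).toReal := by
    have := norm_setIntegral_le_of_norm_le_const (μ := ν i) (s := S)
      (f := fun x => |H x - H 0|) (C := 2*M) (measure_lt_top _ _) ?_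
    · exact le_trans (le_abs_self _) this
    · intro x _
      rw [Real.norm_eq_abs, abs_abs]
      calc |H x - H 0| ≤ |H x| + |H 0| := abs_sub _ _
        _ ≤ M + M := add_le_add (hb x) (hb 0)
        _ = 2*M := by ring
  have e5 : ∫ x in Sᶜ, |H x - H 0| ∂ν i ≤ (ε/2) * (ν i Sᶜ).toReal := by
    have := norm_setIntegral_le_of_norm_le_const (μ := ν i) (s := Sᶜ)
      (f := fun x => |H x - H 0|) (C := ε/2) (measure_lt_top _ _) ?_
    · exact le_trans (le_abs_self _) this
    · intro x hx
      rw [Real.norm_eq_abs, abs_abs]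
      have hx' : ‖x‖ ≤ δ/2 := by
        simp only [hS, Set.mem_compl_iff, Set.mem_setOf_eq, not_lt] at hx
        exact hx
      exact le_of_lt (hδ' x (by linarith))
  have e6 : (ν i Sᶜ).toReal ≤ 1 := by
    have : ν i Sᶜ ≤ 1 := le_trans (measure_mono (Set.subset_univ _)) (by simp)
    simpa using ENNReal.toReal_mono (by simp) this
  have e7 : (2*M) * (ν i S).toReal ≤ (2*M) * (ε / (2 * (2*M+1))) := by
    apply mul_le_mul_of_nonneg_left (le_of_lt hsm) (by positivity)
  have e8 : (2*M) * (ε / (2 * (2*M+1))) < ε/2 := by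
    have h1 : (2*M) * (ε / (2 * (2*M+1))) = ε/2 * ((2*M) / (2*M+1)) := by
      field_simp
    have h2 : (2*M) / (2*M+1) < 1 := by
      rw [div_lt_one (by positivity)]; linarith
    rw [h1]
    calc ε/2 * ((2*M)/(2*M+1)) < ε/2 * 1 := mul_lt_mul_of_pos_left h2 (by positivity)
      _ = ε/2 := mul_one _
  have e9 : (ε/2) * (ν i Sᶜ).toReal ≤ ε/2 := by
    nlinarith [ENNReal.toReal_nonneg (a := ν i Sᶜ)]
  calc |∫ x, (H x - H 0) ∂ν i| ≤ ∫ x, |H x - H 0| ∂ν i := e2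
    _ = _ := e3
    _ ≤ (2*M) * (ν i S).toReal + (ε/2) * (ν i Sᶜ).toReal := add_le_add e4 e5
    _ < ε/2 + ε/2 := by
        apply add_lt_add_of_lt_of_le (lt_of_le_of_lt e7 e8) e9
    _ = ε := by ring
  
end Helpers2
section Helpers3

open scoped Classical

variable {m d : ℕ}

/-- The kernel modified to be `δ₀` off `K`. -/
def primed (K : Set (Euc m)) (μ : Euc m → Measure (Euc d)) : Euc m → Measure (Euc d) :=
  K.piecewise μ (fun _ => Measure.dirac 0)

lemma measurable_primed {K : Set (Euc m)} (hK : IsClosed K) {μ : Euc m → Measure (Euc d)}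
    (hμm : Measurable μ) : Measurable (primed K μ) :=
  Measurable.piecewise hK.measurableSet hμm measurable_const

lemma primed_prob {K : Set (Euc m)} {μ : Euc m → Measure (Euc d)}
    (h1 : ∀ u ∈ K, IsProbabilityMeasure (μ u)) (u : Euc m) :
    IsProbabilityMeasure (primed K μ u) := by
  by_cases h : u ∈ K
  · rw [primed, Set.piecewise_eq_of_mem _ _ _ h]
    exact h1 u h
  · rw [primed, Set.piecewise_eq_of_notMem _ _ _ h]
    infer_instance

lemma primed_eq_of_mem {K : Set (Euc m)} {μ : Euc m → Measure (Euc d)} {u : Euc m}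
    (hu : u ∈ K) : primed K μ u = μ u := Set.piecewise_eq_of_mem _ _ _ hu

lemma primed_eq_of_not_mem {K : Set (Euc m)} {μ : Euc m → Measure (Euc d)} {u : Euc m}
    (hu : u ∉ K) : primed K μ u = Measure.dirac 0 := Set.piecewise_eq_of_notMem _ _ _ hu

lemma bind_primed_eq {K : Set (Euc m)} (hK : IsClosed K) {μ : Euc m → Measure (Euc d)}
    (hμm : Measurable μ) {ρ₀ : Measure (Euc m)} (hρ₀ : ρ₀ Kᶜ = 0) :
    ρ₀.bind μ = ρ₀.bind (primed K μ) := by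
  ext s hs
  rw [Measure.bind_apply hs hμm.aemeasurable, Measure.bind_apply hs (measurable_primed hK hμm).aemeasurable]
  apply lintegral_congr_ae
  have hae : ∀ᵐ u ∂ρ₀, u ∈ K := by
    rw [MeasureTheory.ae_iff]
    exact hρ₀
  filter_upwards [hae] with u hu
  rw [primed_eq_of_mem hu]

lemma bind_prob {κ : Euc m → Measure (Euc d)} (hκm : Measurable κ)
    (hκp : ∀ u, IsProbabilityMeasure (κ u)) (ρ₀ : Measure (Euc m))
    [IsProbabilityMeasure ρ₀] : IsProbabilityMeasure (ρ₀.bind κ) := by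
  constructor
  rw [Measure.bind_apply MeasurableSet.univ hκm.aemeasurable]
  have : ∀ u : Euc m, κ u Set.univ = 1 := fun u => (hκp u).measure_univ
  simp only [this, lintegral_one, measure_univ]

/-- Integral of a bounded continuous function via a truncated `lintegral`. -/
def Gfn (κ : Euc m → Measure (Euc d)) (f : Euc d →ᵇ ℝ) : Euc m → ℝ :=
  fun u => (∫⁻ x, ENNReal.ofReal (f x + ‖f‖) ∂κ u).toReal - ‖f‖

lemma ofReal_add_meas (f : Euc d →ᵇ ℝ) :
    Measurable fun x => ENNReal.ofReal (f x + ‖f‖) :=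
  ENNReal.measurable_ofReal.comp ((f.continuous.measurable).add measurable_const)

lemma lintegral_ofReal_add_le (f : Euc d →ᵇ ℝ) (ν : Measure (Euc d))
    [IsProbabilityMeasure ν] :
    ∫⁻ x, ENNReal.ofReal (f x + ‖f‖) ∂ν ≤ ENNReal.ofReal (2 * ‖f‖) := by
  calc ∫⁻ x, ENNReal.ofReal (f x + ‖f‖) ∂ν ≤ ∫⁻ _, ENNReal.ofReal (2 * ‖f‖) ∂ν := by
        apply lintegral_mono
        intro x
        apply ENNReal.ofReal_le_ofReal
        have := f.norm_coe_le_norm x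
        rw [Real.norm_eq_abs, abs_le] at this
        linarith [this.2]
    _ = ENNReal.ofReal (2 * ‖f‖) := by simp

lemma integral_eq_trunc (f : Euc d →ᵇ ℝ) (ν : Measure (Euc d)) [IsProbabilityMeasure ν] :
    ∫ x, f x ∂ν = (∫⁻ x, ENNReal.ofReal (f x + ‖f‖) ∂ν).toReal - ‖f‖ := by
  have hnn : 0 ≤ᵐ[ν] fun x => f x + ‖f‖ := by
    apply Eventually.of_forall
    intro x
    have := f.norm_coe_le_norm x
    rw [Real.norm_eq_abs, abs_le] at this
    simp only [Pi.zero_apply]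
    linarith [this.1]
  have h1 : ∫ x, (f x + ‖f‖) ∂ν = (∫⁻ x, ENNReal.ofReal (f x + ‖f‖) ∂ν).toReal := by
    rw [integral_eq_lintegral_of_nonneg_ae hnn]
    exact ((f.continuous.add continuous_const).aestronglyMeasurable)
  have h2 : ∫ x, (f x + ‖f‖) ∂ν = ∫ x, f x ∂ν + ‖f‖ := by
    rw [integral_add (f.integrable ν) (integrable_const _), integral_const]
    simp
  linarith [h1, h2]

lemma Gfn_eq {κ : Euc m → Measure (Euc d)} (hκp : ∀ u, IsProbabilityMeasure (κ u))
    (f : Euc d →ᵇ ℝ) (u : Euc m) : Gfn κ f u = ∫ x, f x ∂κ u := by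
  haveI := hκp u
  rw [Gfn, integral_eq_trunc f (κ u)]

lemma Gfn_measurable {κ : Euc m → Measure (Euc d)} (hκm : Measurable κ) (f : Euc d →ᵇ ℝ) :
    Measurable (Gfn κ f) := by
  apply Measurable.sub _ measurable_const
  exact ENNReal.measurable_toReal.comp
    ((Measure.measurable_lintegral (ofReal_add_meas f)).comp hκm)

lemma Gfn_bound {κ : Euc m → Measure (Euc d)} (hκp : ∀ u, IsProbabilityMeasure (κ u))
    (f : Euc d →ᵇ ℝ) (u : Euc m) : |Gfn κ f u| ≤ ‖f‖ := by
  rw [Gfn_eq hκp f u]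
  haveI := hκp u
  calc |∫ x, f x ∂κ u| ≤ ∫ x, |f x| ∂κ u := by
        simpa using norm_integral_le_integral_norm (μ := κ u) (f := fun x => f x)
    _ ≤ ∫ _, ‖f‖ ∂κ u := by
        apply integral_mono (f.integrable (κ u)).abs (integrable_const _)
        intro x
        simpa [Real.norm_eq_abs] using f.norm_coe_le_norm x
    _ = ‖f‖ := by rw [integral_const]; simp

lemma integral_bind_eq {κ : Euc m → Measure (Euc d)} (hκm : Measurable κ)
    (hκp : ∀ u, IsProbabilityMeasure (κ u)) (ρ₀ : Measure (Euc m)) [IsProbabilityMeasure ρ₀]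
    (f : Euc d →ᵇ ℝ) :
    ∫ x, f x ∂(ρ₀.bind κ) = ∫ u, Gfn κ f u ∂ρ₀ := by
  haveI := bind_prob hκm hκp ρ₀
  set L : Euc m → ℝ≥0∞ := fun u => ∫⁻ x, ENNReal.ofReal (f x + ‖f‖) ∂κ u with hL
  have hLm : Measurable L := (Measure.measurable_lintegral (ofReal_add_meas f)).comp hκm
  have hLb : ∀ u, L u ≤ ENNReal.ofReal (2 * ‖f‖) := fun u => by
    haveI := hκp u; exact lintegral_ofReal_add_le f (κ u)
  have h1 : ∫ x, f x ∂(ρ₀.bind κ) = (∫⁻ u, L u ∂ρ₀).toReal - ‖f‖ := by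
    rw [integral_eq_trunc f (ρ₀.bind κ), Measure.lintegral_bind hκm.aemeasurable (ofReal_add_meas f).aemeasurable]
  have h2 : ∫ u, Gfn κ f u ∂ρ₀ = (∫⁻ u, L u ∂ρ₀).toReal - ‖f‖ := by
    have he : ∫ u, Gfn κ f u ∂ρ₀ = ∫ u, ((L u).toReal - ‖f‖) ∂ρ₀ := rfl
    rw [he, integral_sub _ (integrable_const _), integral_const,
        integral_toReal hLm.aemeasurable]
    · simp
    · apply Eventually.of_forall
      intro u
      exact lt_of_le_of_lt (hLb u) ENNReal.ofReal_lt_top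
    · apply (integrable_const ((2*‖f‖))).mono'
      · exact (ENNReal.measurable_toReal.comp hLm).aestronglyMeasurable
      · apply Eventually.of_forall
        intro u
        rw [Real.norm_eq_abs, abs_of_nonneg ENNReal.toReal_nonneg]
        calc (L u).toReal ≤ (ENNReal.ofReal (2*‖f‖)).toReal :=
              ENNReal.toReal_mono ENNReal.ofReal_ne_top (hLb u)
          _ ≤ 2*‖f‖ := le_of_eq (ENNReal.toReal_ofReal (by positivity))
  rw [h1, h2]

end Helpers3
section Helpers4

open ProbabilityTheory

variable {m d : ℕ}

lemma measurable_prod_kernel {κ : Euc m → Measure (Euc d)} (hκm : Measurable κ)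
    (hκp : ∀ u, IsProbabilityMeasure (κ u)) :
    Measurable (fun p : Euc m × Euc m => (κ p.1).prod (κ p.2)) := by
  let k : Kernel (Euc m) (Euc d) := ⟨κ, hκm⟩
  haveI : IsMarkovKernel k := ⟨fun a => hκp a⟩
  let k₁ : Kernel (Euc m × Euc m) (Euc d) := k.comap Prod.fst measurable_fst
  let k₂ : Kernel (Euc m × Euc m) (Euc d) := k.comap Prod.snd measurable_snd
  have h : (fun p : Euc m × Euc m => (κ p.1).prod (κ p.2)) = ⇑(k₁ ×ₖ k₂) := by
    funext p
    rw [Kernel.prod_apply, Kernel.comap_apply, Kernel.comap_apply]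
    rfl
  rw [h]
  exact (k₁ ×ₖ k₂).measurable

lemma bind_prod {κ : Euc m → Measure (Euc d)} (hκm : Measurable κ)
    (hκp : ∀ u, IsProbabilityMeasure (κ u)) (a b : Measure (Euc m))
    [IsProbabilityMeasure a] [IsProbabilityMeasure b] :
    (a.bind κ).prod (b.bind κ) = (a.prod b).bind (fun p => (κ p.1).prod (κ p.2)) := by
  haveI := bind_prob hκm hκp a
  haveI := bind_prob hκm hκp b
  apply Measure.prod_eq
  intro s t hs ht
  rw [Measure.bind_apply (hs.prod ht) (measurable_prod_kernel hκm hκp).aemeasurable]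
  have h1 : ∀ p : Euc m × Euc m, (κ p.1).prod (κ p.2) (s ×ˢ t) = (κ p.1) s * (κ p.2) t := by
    intro p
    haveI := hκp p.1; haveI := hκp p.2
    exact Measure.prod_prod (μ := κ p.1) (ν := κ p.2) s t
  simp_rw [h1]
  have hfm : AEMeasurable (fun u => (κ u) s) a := by
    exact ((Measure.measurable_coe hs).comp hκm).aemeasurable
  have hgm : AEMeasurable (fun u => (κ u) t) b := by
    exact ((Measure.measurable_coe ht).comp hκm).aemeasurable
  rw [lintegral_prod_mul hfm hgm, Measure.bind_apply hs hκm.aemeasurable, Measure.bind_apply ht hκm.aemeasurable]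

lemma map_bind_eq {α β γ : Type*} [MeasurableSpace α] [MeasurableSpace β] [MeasurableSpace γ]
    (mμ : Measure α) {g : α → Measure β} (hg : Measurable g) {h : β → γ} (hh : Measurable h) :
    (mμ.bind g).map h = mμ.bind (fun x => (g x).map h) := by
  ext s hs
  have hgm : Measurable fun x => (g x).map h := by
    exact (Measure.measurable_map h hh).comp hg
  rw [Measure.map_apply hh hs, Measure.bind_apply (hh hs) hg.aemeasurable, Measure.bind_apply hs hgm.aemeasurable]
  apply lintegral_congr
  intro x
  rw [Measure.map_apply hh hs]

lemma measure_bind_map_left {α β γ : Type*} [MeasurableSpace α] [MeasurableSpace β] [MeasurableSpace γ]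
    (mμ : Measure α) {φ : α → β} (hφ : Measurable φ) {κ : β → Measure γ} (hκ : Measurable κ) :
    (mμ.map φ).bind κ = mμ.bind (κ ∘ φ) := by
  ext s hs
  have h1 : Measurable fun ν : Measure γ => ν s := Measure.measurable_coe hs
  have h2 : Measurable fun x => (κ (φ x)) s := by exact (h1.comp hκ).comp hφ
  rw [Measure.bind_apply hs hκ.aemeasurable, lintegral_map (by exact h1.comp hκ) hφ,
    Measure.bind_apply hs (hκ.comp hφ).aemeasurable]
  rfl

lemma mconv_bind {κ : Euc m → Measure (Euc d)} (hκm : Measurable κ)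
    (hκp : ∀ u, IsProbabilityMeasure (κ u)) (a b : Measure (Euc m))
    [IsProbabilityMeasure a] [IsProbabilityMeasure b] :
    mconv (a.bind κ) (b.bind κ) = (a.prod b).bind (fun p => mconv (κ p.1) (κ p.2)) := by
  rw [mconv, bind_prod hκm hκp a b,
    map_bind_eq _ (measurable_prod_kernel hκm hκp) measurable_add]
  rfl

end Helpers4
section Helpers5

variable {N₁ N₂ d : ℕ} {K₁ : Set (Euc N₁)} {K₂ : Set (Euc N₂)}
  {μ : Euc N₂ → Measure (Euc d)} {ρ : Euc N₁ → Measure (Euc N₂)}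

lemma cone_sum_mem {m : ℕ} {K : Set (Euc m)} (hK : IsCone K) {ι : Type*} {t : Finset ι}
    {w : ι → Euc m} (hw : ∀ i ∈ t, w i ∈ K) : (∑ i ∈ t, w i) ∈ K := by
  classical
  induction t using Finset.induction_on with
  | empty => simpa using cone_zero_mem hK
  | insert _ _ hj ih =>
      rw [Finset.sum_insert hj]
      exact cone_add_mem hK (hw _ (Finset.mem_insert_self _ _))
        (ih fun i hi => hw i (Finset.mem_insert_of_mem hi))

/-- `∫ f dμ(0) = f 0`. -/
lemma mu_zero_int (hK₂ : IsCone K₂) (hμ : IsConvSemigroup K₂ μ) (f : Euc d →ᵇ ℝ) :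
    ∫ x, f x ∂(μ 0) = f 0 := by
  have h := hμ.2.2 0 (cone_zero_mem hK₂) f
  have heq : (fun t : ℝ => ∫ x, f x ∂(μ (t • (0 : Euc N₂)))) =
      fun _ : ℝ => ∫ x, f x ∂(μ 0) := by
    funext t; rw [smul_zero]
  rw [heq] at h
  exact tendsto_nhds_unique tendsto_const_nhds h

lemma mu_zero_tail (hK₂ : IsCone K₂) (hμ : IsConvSemigroup K₂ μ) {r : ℝ} (hr : 0 < r) :
    μ 0 {x | r < ‖x‖} = 0 := by
  haveI : IsProbabilityMeasure (μ 0) := hμ.1 0 (cone_zero_mem hK₂)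
  have h1 : (μ 0 {x | r < ‖x‖}).toReal ≤ ∫ x, bumpFn r x ∂(μ 0) := by
    have : (μ 0 {x | r < ‖x‖}).toReal = ∫ x, Set.indicator {y : Euc d | r < ‖y‖}
        (fun _ => (1:ℝ)) x ∂(μ 0) := by
      rw [MeasureTheory.integral_indicator_const _ (tail_measurable r)]
      simp [measureReal_def]
    rw [this]
    apply integral_mono _ ((bumpFn r).integrable _) (bumpFn_indicator_le r hr)
    exact (integrable_const (1:ℝ)).indicator (tail_measurable r)
  rw [mu_zero_int hK₂ hμ (bumpFn r), bumpFn_zero r hr] at h1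
  have h2 : (μ 0 {x | r < ‖x‖}).toReal = 0 :=
    le_antisymm h1 ENNReal.toReal_nonneg
  exact (ENNReal.toReal_eq_zero_iff _).mp h2 |>.resolve_right (measure_ne_top _ _)

/-- tails of `κ (a • v)` vanish as `a → 0⁺` (including `a = 0`). -/
lemma ray_tail (hK₂ : IsCone K₂) (hμ : IsConvSemigroup K₂ μ) (hμm : Measurable μ)
    {v : Euc N₂} (hv : v ∈ K₂) {r : ℝ} (hr : 0 < r) :
    Tendsto (fun a : ℝ => primed K₂ μ (a • v) {x | r < ‖x‖}) (𝓝[Set.Ici 0] 0) (𝓝 0) := by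
  have hIci : Set.Ici (0:ℝ) = insert 0 (Set.Ioi 0) := Set.Ioi_insert.symm
  rw [hIci, nhdsWithin_insert]
  rw [tendsto_sup]
  constructor
  · rw [tendsto_pure_left]
    intro s hs
    have h0 : primed K₂ μ ((0:ℝ) • v) {x | r < ‖x‖} = 0 := by
      rw [zero_smul, primed_eq_of_mem (cone_zero_mem hK₂)]
      exact mu_zero_tail hK₂ hμ hr
    rw [h0]
    exact mem_of_mem_nhds hs
  · apply tail_tendsto_of_conv (fun a : ℝ => primed K₂ μ (a • v))
      (Eventually.of_forall fun a => primed_prob hμ.1 _) _ hr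
    intro f
    have h := hμ.2.2 v hv f
    apply h.congr'
    filter_upwards [eventually_mem_nhdsWithin] with a (ha : a ∈ Set.Ioi 0)
    rw [primed_eq_of_mem (cone_smul_mem hK₂ (le_of_lt ha) hv)]

/-- tails of convolutions indexed by finite sums of cone parameters. -/
lemma sum_tail (hK₂ : IsCone K₂) (hμ : IsConvSemigroup K₂ μ) (hμm : Measurable μ)
    {ι : Type*} (t : Finset ι) (w : ι → ℕ → Euc N₂) (hw : ∀ i n, w i n ∈ K₂)
    (hwt : ∀ i ∈ t, ∀ r : ℝ, 0 < r →
      Tendsto (fun n => primed K₂ μ (w i n) {x | r < ‖x‖}) atTop (𝓝 0)) :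
    ∀ r : ℝ, 0 < r →
      Tendsto (fun n => primed K₂ μ (∑ i ∈ t, w i n) {x | r < ‖x‖}) atTop (𝓝 0) := by
  classical
  induction t using Finset.induction_on with
  | empty =>
      intro r hr
      have : ∀ n : ℕ, primed K₂ μ (∑ i ∈ (∅ : Finset ι), w i n) {x | r < ‖x‖} = 0 := by
        intro n
        rw [Finset.sum_empty, primed_eq_of_mem (cone_zero_mem hK₂)]
        exact mu_zero_tail hK₂ hμ hr
      simp only [this]
      exact tendsto_const_nhds
  | @insert j tt hj ih =>
      intro r hr
      have hsum : ∀ n, (∑ i ∈ tt, w i n) ∈ K₂ :=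
        fun n => cone_sum_mem hK₂ (fun i _ => hw i n)
      have hkey : ∀ n : ℕ, primed K₂ μ (∑ i ∈ insert j tt, w i n) =
          mconv (primed K₂ μ (w j n)) (primed K₂ μ (∑ i ∈ tt, w i n)) := by
        intro n
        rw [Finset.sum_insert hj, primed_eq_of_mem (hw j n), primed_eq_of_mem (hsum n),
          primed_eq_of_mem (cone_add_mem hK₂ (hw j n) (hsum n))]
        exact (hμ.2.1 _ (hw j n) _ (hsum n)).symm
      have hub : ∀ n : ℕ, primed K₂ μ (∑ i ∈ insert j tt, w i n) {x | r < ‖x‖} ≤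
          primed K₂ μ (w j n) {x | r/2 < ‖x‖} +
          primed K₂ μ (∑ i ∈ tt, w i n) {x | r/2 < ‖x‖} := by
        intro n
        rw [hkey n]
        haveI := primed_prob hμ.1 (K := K₂) (μ := μ) (w j n)
        haveI := primed_prob hμ.1 (K := K₂) (μ := μ) (∑ i ∈ tt, w i n)
        exact tail_mconv_le _ _ r
      have hlim : Tendsto (fun n => primed K₂ μ (w j n) {x | r/2 < ‖x‖} +
          primed K₂ μ (∑ i ∈ tt, w i n) {x | r/2 < ‖x‖}) atTop (𝓝 0) := by
        have h1 := hwt j (Finset.mem_insert_self _ _) (r/2) (by positivity)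
        have h2 := ih (fun i hi => hwt i (Finset.mem_insert_of_mem hi)) (r/2) (by positivity)
        have := h1.add h2
        simpa using this
      exact tendsto_of_tendsto_of_tendsto_of_le_of_le' tendsto_const_nhds hlim
        (Eventually.of_forall fun n => zero_le) (Eventually.of_forall hub)

end Helpers5
section Helpers6

variable {N₂ d : ℕ} {K₂ : Set (Euc N₂)} {μ : Euc N₂ → Measure (Euc d)}

lemma max_neg_aux (x : ℝ) : x + max (-x) 0 = max x 0 := by
  rcases le_total x 0 with h | h
  · rw [max_eq_left (by linarith : (0:ℝ) ≤ -x), max_eq_right h]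
    ring
  · rw [max_eq_right (by linarith : -x ≤ (0:ℝ)), max_eq_left h]
    ring

/-- tails of `κ (u n)` vanish for any sequence `u n → 0` inside the cone. -/
lemma seq_tail (hK₂ : IsCone K₂) (hμ : IsConvSemigroup K₂ μ) (hμm : Measurable μ)
    (u : ℕ → Euc N₂) (humem : ∀ n, u n ∈ K₂) (hu0 : Tendsto u atTop (𝓝 0))
    {r : ℝ} (hr : 0 < r) :
    Tendsto (fun n => primed K₂ μ (u n) {x | r < ‖x‖}) atTop (𝓝 0) := by
  classical
  obtain ⟨b, hbK, hspan, hli⟩ := exists_linearIndependent ℝ K₂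
  haveI : Fintype b := (hli.setFinite).fintype
  set V : Submodule ℝ (Euc N₂) := Submodule.span ℝ (Set.range ((↑) : b → Euc N₂)) with hV
  have hmem : ∀ n, u n ∈ V := by
    intro n
    rw [hV, Subtype.range_coe, hspan]
    exact Submodule.subset_span (humem n)
  set B : Module.Basis b ℝ V := Module.Basis.span hli with hB
  set ucoe : ℕ → V := fun n => ⟨u n, hmem n⟩ with hucoe
  have hucoe0 : Tendsto ucoe atTop (𝓝 0) := by
    rw [nhds_subtype_eq_comap, tendsto_comap_iff]
    exact hu0
  set c : ℕ → b → ℝ := fun n i => B.repr (ucoe n) i with hc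
  have hctend : ∀ i : b, Tendsto (fun n => c n i) atTop (𝓝 0) := by
    intro i
    have hcont : Continuous fun x : V => B.repr x i := by
      have h1 : Continuous (B.coord i) := LinearMap.continuous_of_finiteDimensional _
      exact h1
    have := (hcont.tendsto 0).comp hucoe0
    simpa [Function.comp_def] using this
  have hdecomp : ∀ n, u n = ∑ i : b, c n i • (i : Euc N₂) := by
    intro n
    calc u n = ((ucoe n : V) : Euc N₂) := rfl
      _ = ((∑ i : b, B.repr (ucoe n) i • B i : V) : Euc N₂) := by rw [B.sum_repr (ucoe n)]
      _ = ∑ i : b, c n i • (i : Euc N₂) := by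
          rw [Submodule.coe_sum]
          apply Finset.sum_congr rfl
          intro i _
          rw [SetLike.val_smul, hB, Module.Basis.span_apply]
  set w : b → ℕ → Euc N₂ := fun i n => max (c n i) 0 • (i : Euc N₂) with hw
  set w' : b → ℕ → Euc N₂ := fun i n => max (-(c n i)) 0 • (i : Euc N₂) with hw'
  have hwmem : ∀ i n, w i n ∈ K₂ := fun i n =>
    cone_smul_mem hK₂ (le_max_right _ _) (hbK i.2)
  have hw'mem : ∀ i n, w' i n ∈ K₂ := fun i n =>
    cone_smul_mem hK₂ (le_max_right _ _) (hbK i.2)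
  have htmax : ∀ i : b, Tendsto (fun n => max (c n i) 0) atTop (𝓝[Set.Ici 0] 0) := by
    intro i
    rw [tendsto_nhdsWithin_iff]
    constructor
    · have := (hctend i).max (tendsto_const_nhds (x := (0:ℝ)))
      simpa using this
    · exact Eventually.of_forall fun n => Set.mem_Ici.mpr (le_max_right _ _)
  have htmax' : ∀ i : b, Tendsto (fun n => max (-(c n i)) 0) atTop (𝓝[Set.Ici 0] 0) := by
    intro i
    rw [tendsto_nhdsWithin_iff]
    constructor
    · have := ((hctend i).neg).max (tendsto_const_nhds (x := (0:ℝ)))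
      simpa using this
    · exact Eventually.of_forall fun n => Set.mem_Ici.mpr (le_max_right _ _)
  have hwt : ∀ i ∈ (Finset.univ : Finset b), ∀ s : ℝ, 0 < s →
      Tendsto (fun n => primed K₂ μ (w i n) {x | s < ‖x‖}) atTop (𝓝 0) := by
    intro i _ s hs
    exact (ray_tail hK₂ hμ hμm (hbK i.2) hs).comp (htmax i)
  have hw't : ∀ i ∈ (Finset.univ : Finset b), ∀ s : ℝ, 0 < s →
      Tendsto (fun n => primed K₂ μ (w' i n) {x | s < ‖x‖}) atTop (𝓝 0) := by
    intro i _ s hs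
    exact (ray_tail hK₂ hμ hμm (hbK i.2) hs).comp (htmax' i)
  have hp := sum_tail hK₂ hμ hμm Finset.univ w hwmem hwt (r/2) (by positivity)
  have hq := sum_tail hK₂ hμ hμm Finset.univ w' hw'mem hw't (r/2) (by positivity)
  have hpq : ∀ n, u n + (∑ i : b, w' i n) = ∑ i : b, w i n := by
    intro n
    rw [hdecomp n, ← Finset.sum_add_distrib]
    apply Finset.sum_congr rfl
    intro i _
    rw [hw, hw', ← add_smul, max_neg_aux]
  have hqmem : ∀ n, (∑ i : b, w' i n) ∈ K₂ :=
    fun n => cone_sum_mem hK₂ (fun i _ => hw'mem i n)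
  have hpmem : ∀ n, (∑ i : b, w i n) ∈ K₂ :=
    fun n => cone_sum_mem hK₂ (fun i _ => hwmem i n)
  have hconvkey : ∀ n, mconv (primed K₂ μ (u n)) (primed K₂ μ (∑ i : b, w' i n)) =
      primed K₂ μ (∑ i : b, w i n) := by
    intro n
    rw [primed_eq_of_mem (humem n), primed_eq_of_mem (hqmem n), ← hpq n,
      primed_eq_of_mem (cone_add_mem hK₂ (humem n) (hqmem n))]
    exact hμ.2.1 _ (humem n) _ (hqmem n)
  have hub : ∀ n, primed K₂ μ (u n) {x | r < ‖x‖} ≤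
      primed K₂ μ (∑ i : b, w i n) {x | r/2 < ‖x‖} +
      primed K₂ μ (∑ i : b, w' i n) {x | r/2 < ‖x‖} := by
    intro n
    haveI := primed_prob hμ.1 (K := K₂) (μ := μ) (u n)
    haveI := primed_prob hμ.1 (K := K₂) (μ := μ) (∑ i : b, w' i n)
    have := tail_factor_le (primed K₂ μ (u n)) (primed K₂ μ (∑ i : b, w' i n)) r
    rwa [hconvkey n] at this
  have hlim : Tendsto (fun n => primed K₂ μ (∑ i : b, w i n) {x | r/2 < ‖x‖} +
      primed K₂ μ (∑ i : b, w' i n) {x | r/2 < ‖x‖}) atTop (𝓝 0) := by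
    have := hp.add hq
    simpa using this
  exact tendsto_of_tendsto_of_tendsto_of_le_of_le' tendsto_const_nhds hlim
    (Eventually.of_forall fun n => zero_le) (Eventually.of_forall hub)

end Helpers6
section Helpers7

variable {N₁ N₂ d : ℕ} {K₁ : Set (Euc N₁)} {K₂ : Set (Euc N₂)}
  {μ : Euc N₂ → Measure (Euc d)} {ρ : Euc N₁ → Measure (Euc N₂)}

lemma bcf_eps (f : Euc d →ᵇ ℝ) {ε : ℝ} (hε : 0 < ε) :
    ∃ δ : ℝ, 0 < δ ∧ ∀ x : Euc d, ‖x‖ < δ → |f x - f 0| < ε := by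
  have h := Metric.continuousAt_iff.mp (f.continuous.continuousAt (x := 0))
  obtain ⟨δ, hδ, hδ'⟩ := h ε hε
  refine ⟨δ, hδ, fun x hx => ?_⟩
  have h2 := hδ' (show dist x 0 < δ by simpa [dist_zero_right] using hx)
  simpa [Real.dist_eq] using h2

lemma seq_weak (hK₂ : IsCone K₂) (hμ : IsConvSemigroup K₂ μ) (hμm : Measurable μ)
    (u : ℕ → Euc N₂) (humem : ∀ n, u n ∈ K₂) (hu0 : Tendsto u atTop (𝓝 0))
    (f : Euc d →ᵇ ℝ) :
    Tendsto (fun n => ∫ x, f x ∂(primed K₂ μ (u n))) atTop (𝓝 (f 0)) := by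
  apply integral_tendsto_of_tails (fun n => primed K₂ μ (u n))
    (Eventually.of_forall fun n => primed_prob hμ.1 _)
    (fun r hr => seq_tail hK₂ hμ hμm u humem hu0 hr)
    (⇑f) f.continuous.measurable ‖f‖
    (fun x => by simpa [Real.norm_eq_abs] using f.norm_coe_le_norm x)
    (fun ε hε => by
      obtain ⟨δ, hδ, hδ'⟩ := bcf_eps f hε
      exact ⟨δ, hδ, hδ'⟩)

lemma Gfn_zero (hK₂ : IsCone K₂) (hμ : IsConvSemigroup K₂ μ) (f : Euc d →ᵇ ℝ) :
    Gfn (primed K₂ μ) f 0 = f 0 := by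
  rw [Gfn_eq (primed_prob hμ.1) f 0, primed_eq_of_mem (cone_zero_mem hK₂),
    mu_zero_int hK₂ hμ f]

lemma G_cont (hK₂ : IsCone K₂) (hμ : IsConvSemigroup K₂ μ) (hμm : Measurable μ)
    (f : Euc d →ᵇ ℝ) {ε : ℝ} (hε : 0 < ε) :
    ∃ δ : ℝ, 0 < δ ∧ ∀ v : Euc N₂, ‖v‖ < δ →
      |Gfn (primed K₂ μ) f v - Gfn (primed K₂ μ) f 0| < ε := by
  by_contra hcon
  push_neg at hcon
  have hchoice : ∀ n : ℕ, ∃ v : Euc N₂, ‖v‖ < 1/(n+1) ∧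
      ε ≤ |Gfn (primed K₂ μ) f v - Gfn (primed K₂ μ) f 0| := by
    intro n
    obtain ⟨v, hv1, hv2⟩ := hcon (1/(n+1)) (by positivity)
    exact ⟨v, hv1, hv2⟩
  choose u hu1 hu2 using hchoice
  have humem : ∀ n, u n ∈ K₂ := by
    intro n
    by_contra hn
    have h1 : Gfn (primed K₂ μ) f (u n) = f 0 := by
      rw [Gfn_eq (primed_prob hμ.1) f (u n), primed_eq_of_not_mem hn]
      simp [integral_dirac]
    have h2 := hu2 n
    rw [h1, Gfn_zero hK₂ hμ f] at h2
    simp at h2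
    linarith
  have hu0 : Tendsto u atTop (𝓝 0) := by
    apply squeeze_zero_norm (fun n => le_of_lt (hu1 n))
    have h := tendsto_one_div_add_atTop_nhds_zero_nat (𝕜 := ℝ)
    exact h
  have hweak := seq_weak hK₂ hμ hμm u humem hu0 f
  have hGeq : ∀ n, Gfn (primed K₂ μ) f (u n) = ∫ x, f x ∂(primed K₂ μ (u n)) :=
    fun n => Gfn_eq (primed_prob hμ.1) f (u n)
  have : Tendsto (fun n => Gfn (primed K₂ μ) f (u n)) atTop (𝓝 (f 0)) := by
    simp_rw [hGeq]; exact hweak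
  rw [← Gfn_zero hK₂ hμ f] at this
  have hz : Tendsto (fun n => |Gfn (primed K₂ μ) f (u n) - Gfn (primed K₂ μ) f 0|)
      atTop (𝓝 0) := by
    have h1 := this.sub_const (Gfn (primed K₂ μ) f 0)
    rw [sub_self] at h1
    simpa using h1.abs
  have hev := hz.eventually (eventually_lt_nhds hε)
  obtain ⟨n, hn⟩ := hev.exists
  exact absurd (hu2 n) (not_le.mpr hn)

/-- Part 1: each subordinated measure is a probability measure. -/
lemma part1 (hK₂ : IsCone K₂) (hμ : IsConvSemigroup K₂ μ) (hμm : Measurable μ)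
    (hρ : IsConvSemigroup K₁ ρ) (hsupp : ∀ s ∈ K₁, ρ s K₂ᶜ = 0)
    {s : Euc N₁} (hs : s ∈ K₁) : IsProbabilityMeasure ((ρ s).bind μ) := by
  haveI := hρ.1 s hs
  rw [bind_primed_eq hK₂.2.1 hμm (hsupp s hs)]
  exact bind_prob (measurable_primed hK₂.2.1 hμm) (primed_prob hμ.1) (ρ s)

/-- Part 2: the convolution identity. -/
lemma part2 (hK₁ : IsCone K₁) (hK₂ : IsCone K₂) (hμ : IsConvSemigroup K₂ μ)
    (hμm : Measurable μ) (hρ : IsConvSemigroup K₁ ρ) (hsupp : ∀ s ∈ K₁, ρ s K₂ᶜ = 0)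
    {s₁ s₂ : Euc N₁} (hs₁ : s₁ ∈ K₁) (hs₂ : s₂ ∈ K₁) :
    mconv ((ρ s₁).bind μ) ((ρ s₂).bind μ) = (ρ (s₁ + s₂)).bind μ := by
  set κ := primed K₂ μ with hκ
  have hκm : Measurable κ := measurable_primed hK₂.2.1 hμm
  have hκp : ∀ v, IsProbabilityMeasure (κ v) := primed_prob hμ.1
  haveI := hρ.1 s₁ hs₁
  haveI := hρ.1 s₂ hs₂
  rw [bind_primed_eq hK₂.2.1 hμm (hsupp s₁ hs₁), bind_primed_eq hK₂.2.1 hμm (hsupp s₂ hs₂),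
    bind_primed_eq hK₂.2.1 hμm (hsupp _ (cone_add_mem hK₁ hs₁ hs₂)), ← hκ]
  rw [mconv_bind hκm hκp (ρ s₁) (ρ s₂)]
  have hmconvm : Measurable fun p : Euc N₂ × Euc N₂ => mconv (κ p.1) (κ p.2) := by
    have h1 : Measurable fun p : Euc N₂ × Euc N₂ => (κ p.1).prod (κ p.2) :=
      measurable_prod_kernel hκm hκp
    exact (Measure.measurable_map _ measurable_add).comp h1
  have haddm : Measurable fun p : Euc N₂ × Euc N₂ => κ (p.1 + p.2) := by
    exact hκm.comp measurable_add
  have hstep : ((ρ s₁).prod (ρ s₂)).bind (fun p => mconv (κ p.1) (κ p.2)) =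
      ((ρ s₁).prod (ρ s₂)).bind (fun p => κ (p.1 + p.2)) := by
    ext S hS
    rw [Measure.bind_apply hS hmconvm.aemeasurable, Measure.bind_apply hS haddm.aemeasurable]
    apply lintegral_congr_ae
    have hnull : ((ρ s₁).prod (ρ s₂)) {p : Euc N₂ × Euc N₂ | ¬(p.1 ∈ K₂ ∧ p.2 ∈ K₂)} = 0 := by
      have hsub : {p : Euc N₂ × Euc N₂ | ¬(p.1 ∈ K₂ ∧ p.2 ∈ K₂)} ⊆
          (K₂ᶜ ×ˢ Set.univ) ∪ (Set.univ ×ˢ K₂ᶜ) := by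
        rintro ⟨x, y⟩ h
        simp only [Set.mem_setOf_eq, not_and_or] at h
        rcases h with h | h
        · exact Or.inl (by simp [h])
        · exact Or.inr (by simp [h])
      apply measure_mono_null hsub
      apply measure_union_null
      · rw [Measure.prod_prod]
        rw [hsupp s₁ hs₁]
        simp
      · rw [Measure.prod_prod]
        rw [hsupp s₂ hs₂]
        simp
    have hae : ∀ᵐ p ∂((ρ s₁).prod (ρ s₂)), p.1 ∈ K₂ ∧ p.2 ∈ K₂ := by
      rw [MeasureTheory.ae_iff]
      exact hnull
    filter_upwards [hae] with p hp
    rw [hκ, primed_eq_of_mem hp.1, primed_eq_of_mem hp.2,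
      primed_eq_of_mem (cone_add_mem hK₂ hp.1 hp.2)]
    rw [hμ.2.1 _ hp.1 _ hp.2]
  rw [hstep]
  have hfinal : ((ρ s₁).prod (ρ s₂)).bind (fun p => κ (p.1 + p.2)) =
      (mconv (ρ s₁) (ρ s₂)).bind κ := by
    rw [mconv, measure_bind_map_left _ measurable_add hκm]
    rfl
  rw [hfinal, hρ.2.1 s₁ hs₁ s₂ hs₂]

/-- Part 3: weak continuity. -/
lemma part3 (hK₁ : IsCone K₁) (hK₂ : IsCone K₂) (hμ : IsConvSemigroup K₂ μ)
    (hμm : Measurable μ) (hρ : IsConvSemigroup K₁ ρ) (hsupp : ∀ s ∈ K₁, ρ s K₂ᶜ = 0)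
    {s : Euc N₁} (hs : s ∈ K₁) (f : Euc d →ᵇ ℝ) :
    Tendsto (fun t : ℝ => ∫ x, f x ∂((ρ (t • s)).bind μ)) (𝓝[>] (0:ℝ)) (𝓝 (f 0)) := by
  set κ := primed K₂ μ with hκ
  have hκm : Measurable κ := measurable_primed hK₂.2.1 hμm
  have hκp : ∀ v, IsProbabilityMeasure (κ v) := primed_prob hμ.1
  have hmem : ∀ t : ℝ, t ∈ Set.Ioi (0:ℝ) → t • s ∈ K₁ :=
    fun t ht => cone_smul_mem hK₁ (le_of_lt ht) hs
  have heq : ∀ᶠ t : ℝ in 𝓝[>] (0:ℝ), ∫ x, f x ∂((ρ (t • s)).bind μ) =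
      ∫ u, Gfn κ f u ∂(ρ (t • s)) := by
    filter_upwards [eventually_mem_nhdsWithin] with t ht
    haveI := hρ.1 _ (hmem t ht)
    rw [bind_primed_eq hK₂.2.1 hμm (hsupp _ (hmem t ht)), ← hκ,
      integral_bind_eq hκm hκp (ρ (t • s)) f]
  have hmain : Tendsto (fun t : ℝ => ∫ u, Gfn κ f u ∂(ρ (t • s))) (𝓝[>] (0:ℝ))
      (𝓝 (f 0)) := by
    have h0 : Gfn κ f 0 = f 0 := Gfn_zero hK₂ hμ f
    rw [← h0]
    apply integral_tendsto_of_tails (fun t : ℝ => ρ (t • s))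
      (by filter_upwards [eventually_mem_nhdsWithin] with t ht; exact hρ.1 _ (hmem t ht))
      (fun r hr => tail_tendsto_of_conv _
        (by filter_upwards [eventually_mem_nhdsWithin] with t ht; exact hρ.1 _ (hmem t ht))
        (fun g => hρ.2.2 s hs g) hr)
      (Gfn κ f) (Gfn_measurable hκm f) ‖f‖ (Gfn_bound hκp f)
      (fun ε hε => G_cont hK₂ hμ hμm f hε)
  exact Tendsto.congr' (heq.mono fun _ ht => ht.symm) hmain
  
end Helpers7


/-- Subordination of a K₂-parameter convolution semigroup by a K₁-parameter
convolution semigroup supported on K₂ yields a K₁-parameter convolution semigroup. -/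
theorem subordination_is_conv_semigroup {N₁ N₂ d : ℕ}
    (K₁ : Set (Euc N₁)) (K₂ : Set (Euc N₂))
    (μ : Euc N₂ → Measure (Euc d)) (ρ : Euc N₁ → Measure (Euc N₂))
    (hK₁ : IsCone K₁) (hK₂ : IsCone K₂)
    (hμ : IsConvSemigroup K₂ μ) (hμm : Measurable μ)
    (hρ : IsConvSemigroup K₁ ρ) (hsupp : ∀ s ∈ K₁, ρ s K₂ᶜ = 0) :
    IsConvSemigroup K₁ (fun s => (ρ s).bind μ) := by
  exact ⟨fun s hs => part1 hK₂ hμ hμm hρ hsupp hs,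
    fun s₁ hs₁ s₂ hs₂ => part2 hK₁ hK₂ hμ hμm hρ hsupp hs₁ hs₂,
    fun s hs f => part3 hK₁ hK₂ hμ hμm hρ hsupp hs f⟩
end
end

section
/- Let {μ_u : u ∈ K₂} be a K₂-parameter convolution semigroup on ℝ^d, ρ an infinitely divisible probability measure on ℝ^{N₂} with Supp(ρ) ⊆ K₂, and define σ(B) = ∫_{K₂} μ_u(B) ρ(du). Then σ is infinitely divisible. -/
open MeasureTheory Filter Set
open scoped Topology Pointwise ENNReal NNReal BoundedContinuousFunction

noncomputable section

section Aux

open ProbabilityTheory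

variable {n d : ℕ}

/-! ### Basic facts about `mconv` -/

lemma measurable_addFun : Measurable (fun p : Euc n × Euc n => p.1 + p.2) :=
  measurable_fst.add measurable_snd

lemma mconv_apply (α β : Measure (Euc n)) {B : Set (Euc n)} (hB : MeasurableSet B) :
    mconv α β B = (α.prod β) ((fun p : Euc n × Euc n => p.1 + p.2) ⁻¹' B) :=
  Measure.map_apply measurable_addFun hB

lemma mconv_prob (α β : Measure (Euc n)) [IsProbabilityMeasure α] [IsProbabilityMeasure β] :
    IsProbabilityMeasure (mconv α β) :=
  Measure.isProbabilityMeasure_map measurable_addFun.aemeasurable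

lemma mconv_dirac (α : Measure (Euc n)) [SFinite α] : mconv α (Measure.dirac 0) = α := by
  rw [mconv, Measure.prod_dirac,
    Measure.map_map measurable_addFun measurable_prodMk_right]
  simp [Function.comp_def]

lemma nconv_prob (ν : Measure (Euc n)) [IsProbabilityMeasure ν] :
    ∀ k, IsProbabilityMeasure (nconv ν k)
  | 0 => by rw [nconv]; infer_instance
  | k + 1 => by
      rw [nconv]
      have := nconv_prob ν k
      exact mconv_prob _ _

/-! ### Supports of measures -/

/-- The set of points all of whose neighborhoods have positive measure. -/
def msupp (ν : Measure (Euc n)) : Set (Euc n) :=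
  {x | ∀ ε : ℝ, 0 < ε → 0 < ν (Metric.ball x ε)}

lemma msupp_mconv {α β : Measure (Euc n)} [SFinite α] [SFinite β] {a b : Euc n}
    (ha : a ∈ msupp α) (hb : b ∈ msupp β) : a + b ∈ msupp (mconv α β) := by
  intro ε hε
  have hsub : Metric.ball a (ε / 2) ×ˢ Metric.ball b (ε / 2) ⊆
      (fun p : Euc n × Euc n => p.1 + p.2) ⁻¹' Metric.ball (a + b) ε := by
    rintro ⟨x, y⟩ ⟨hx, hy⟩
    simp only [Metric.mem_ball, mem_preimage] at *
    calc dist (x + y) (a + b) ≤ dist x a + dist y b := dist_add_add_le _ _ _ _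
      _ < ε / 2 + ε / 2 := add_lt_add hx hy
      _ = ε := add_halves ε
  rw [mconv_apply _ _ measurableSet_ball]
  calc (0 : ℝ≥0∞) < α (Metric.ball a (ε / 2)) * β (Metric.ball b (ε / 2)) :=
        ENNReal.mul_pos (ha _ (by positivity)).ne' (hb _ (by positivity)).ne'
    _ = (α.prod β) (Metric.ball a (ε / 2) ×ˢ Metric.ball b (ε / 2)) :=
        (Measure.prod_prod _ _).symm
    _ ≤ _ := measure_mono hsub

lemma msupp_nconv {ν : Measure (Euc n)} [IsProbabilityMeasure ν] {x : Euc n}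
    (hx : x ∈ msupp ν) : ∀ j : ℕ, ((j + 1) • x) ∈ msupp (nconv ν (j + 1))
  | 0 => by
      have : nconv ν 1 = ν := by rw [nconv, nconv, mconv_dirac]
      rw [this]; simpa using hx
  | j + 1 => by
      have hprev := msupp_nconv hx j
      have : IsProbabilityMeasure (nconv ν (j + 1)) := nconv_prob ν (j + 1)
      have h := msupp_mconv hx hprev
      rw [show nconv ν (j + 1 + 1) = mconv ν (nconv ν (j + 1)) from rfl]
      convert h using 1
      rw [succ_nsmul']

lemma mem_of_msupp_null {K : Set (Euc n)} (hK : IsClosed K) {ν : Measure (Euc n)}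
    (hν : ν Kᶜ = 0) {x : Euc n} (hx : x ∈ msupp ν) : x ∈ K := by
  by_contra hxK
  obtain ⟨ε, hε, hball⟩ := Metric.isOpen_iff.mp hK.isOpen_compl x hxK
  have := hx ε hε
  have hle : ν (Metric.ball x ε) ≤ ν Kᶜ := measure_mono hball
  rw [hν] at hle
  exact absurd (le_antisymm hle zero_le) this.ne'

/-- Convolution roots of a measure supported on a cone are supported on the cone. -/
lemma root_null {K : Set (Euc n)} (hK : IsCone K) {ν ρ : Measure (Euc n)}
    [IsProbabilityMeasure ν] {k : ℕ} (hk : 1 ≤ k) (hnk : nconv ν k = ρ)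
    (hρ : ρ Kᶜ = 0) : ν Kᶜ = 0 := by
  obtain ⟨j, rfl⟩ : ∃ j, k = j + 1 := ⟨k - 1, (Nat.succ_pred_eq_of_pos hk).symm⟩
  have hsub : ∀ x ∈ msupp ν, x ∈ K := by
    intro x hx
    have h1 : ((j + 1) • x) ∈ msupp (nconv ν (j + 1)) := msupp_nconv hx j
    rw [hnk] at h1
    have h2 : ((j + 1) • x) ∈ K := mem_of_msupp_null hK.2.1 hρ h1
    have h3 : (((j : ℝ) + 1)⁻¹ : ℝ) • ((j + 1) • x) ∈ K := by
      refine hK.2.2.2.1 _ (by positivity) _ h2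
    have h4 : (((j : ℝ) + 1)⁻¹ : ℝ) • ((j + 1 : ℕ) • x) = x := by
      rw [← Nat.cast_smul_eq_nsmul ℝ, smul_smul]
      push_cast
      rw [inv_mul_cancel₀ (by positivity), one_smul]
    rwa [h4] at h3
  refine measure_null_of_locally_null _ (fun x hx => ?_)
  have hxns : x ∉ msupp ν := fun h => hx (hsub x h)
  simp only [msupp, mem_setOf_eq, not_forall] at hxns
  obtain ⟨ε, hε, hnull⟩ := hxns
  refine ⟨Metric.ball x ε, mem_nhdsWithin_of_mem_nhds (Metric.ball_mem_nhds x hε), ?_⟩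
  exact le_antisymm (not_lt.mp hnull) zero_le

/-! ### The cone is closed under addition -/

lemma cone_add {K : Set (Euc n)} (hK : IsCone K) {a b : Euc n}
    (ha : a ∈ K) (hb : b ∈ K) : a + b ∈ K := by
  obtain ⟨-, -, hconv, hsmul, -, -⟩ := hK
  have hmid : (1 / 2 : ℝ) • a + (1 / 2 : ℝ) • b ∈ K :=
    hconv ha hb (by norm_num) (by norm_num) (by norm_num)
  have h2 : (2 : ℝ) • ((1 / 2 : ℝ) • a + (1 / 2 : ℝ) • b) ∈ K :=
    hsmul 2 (by norm_num) _ hmid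
  have : (2 : ℝ) • ((1 / 2 : ℝ) • a + (1 / 2 : ℝ) • b) = a + b := by module
  rwa [this] at h2

lemma mconv_null {K : Set (Euc n)} (hK : IsCone K) {ν₁ ν₂ : Measure (Euc n)}
    [SFinite ν₁] [SFinite ν₂] (h₁ : ν₁ Kᶜ = 0) (h₂ : ν₂ Kᶜ = 0) :
    mconv ν₁ ν₂ Kᶜ = 0 := by
  have hKm : MeasurableSet K := hK.2.1.measurableSet
  rw [mconv_apply _ _ hKm.compl]
  refine measure_mono_null
    (t := Kᶜ ×ˢ (univ : Set (Euc n)) ∪ (univ : Set (Euc n)) ×ˢ Kᶜ) (fun p hp => ?_) ?_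
  · by_contra h
    simp only [mem_union, mem_prod, mem_univ, and_true, true_and, mem_compl_iff,
      not_or, not_not] at h
    exact hp (cone_add hK h.1 h.2)
  · refine measure_union_null ?_ ?_ <;> rw [Measure.prod_prod]
    · rw [h₁, zero_mul]
    · rw [h₂, mul_zero]

/-! ### Probability of bind -/

lemma bind_prob_s19 {μ : Euc n → Measure (Euc d)} (hm : Measurable μ)
    (hp : ∀ s, IsProbabilityMeasure (μ s)) (ν : Measure (Euc n))
    [IsProbabilityMeasure ν] : IsProbabilityMeasure (ν.bind μ) := by
  constructor
  rw [Measure.bind_apply MeasurableSet.univ hm.aemeasurable]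
  simp [measure_univ]

/-! ### The key interchange lemma -/

lemma bind_mconv {K : Set (Euc n)} (hK : IsCone K)
    {μ : Euc n → Measure (Euc d)} (hm : Measurable μ)
    (hp : ∀ s, IsProbabilityMeasure (μ s))
    (hsg : ∀ s₁ ∈ K, ∀ s₂ ∈ K, mconv (μ s₁) (μ s₂) = μ (s₁ + s₂))
    {ν₁ ν₂ : Measure (Euc n)} [IsProbabilityMeasure ν₁] [IsProbabilityMeasure ν₂]
    (h₁ : ν₁ Kᶜ = 0) (h₂ : ν₂ Kᶜ = 0) :
    (mconv ν₁ ν₂).bind μ = mconv (ν₁.bind μ) (ν₂.bind μ) := by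
  have hb1 : IsProbabilityMeasure (ν₁.bind μ) := bind_prob_s19 hm hp ν₁
  have hb2 : IsProbabilityMeasure (ν₂.bind μ) := bind_prob_s19 hm hp ν₂
  have hae₁ : ∀ᵐ s ∂ν₁, s ∈ K := mem_ae_iff.mpr (by simpa using h₁)
  have hae₂ : ∀ᵐ s ∂ν₂, s ∈ K := mem_ae_iff.mpr (by simpa using h₂)
  ext B hB
  have hcoe : Measurable fun s => μ s B := (Measure.measurable_coe hB).comp hm
  -- joint measurability of (x, s) ↦ μ s {y | x + y ∈ B}
  have hjoint : Measurable (fun q : Euc d × Euc n => μ q.2 {y | q.1 + y ∈ B}) := by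
    let κ : Kernel (Euc d × Euc n) (Euc d) := ⟨fun p => μ p.2, hm.comp measurable_snd⟩
    have : IsMarkovKernel κ := ⟨fun a => hp a.2⟩
    have hset : MeasurableSet {r : (Euc d × Euc n) × Euc d | r.1.1 + r.2 ∈ B} :=
      ((measurable_fst.fst.add measurable_snd)) hB
    exact Kernel.measurable_kernel_prodMk_left (κ := κ) hset
  have hsetx : ∀ x : Euc d, MeasurableSet {y : Euc d | x + y ∈ B} :=
    fun x => (measurable_const_add x) hB
  -- LHS
  rw [Measure.bind_apply hB hm.aemeasurable, mconv,
    MeasureTheory.lintegral_map hcoe measurable_addFun,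
    lintegral_prod _ (show Measurable fun p : Euc n × Euc n => μ (p.1 + p.2) B from
      hcoe.comp measurable_addFun).aemeasurable]
  -- RHS
  rw [mconv_apply _ _ hB, Measure.prod_apply (measurable_addFun hB)]
  have hpre : ∀ x : Euc d,
      Prod.mk x ⁻¹' ((fun p : Euc d × Euc d => p.1 + p.2) ⁻¹' B) = {y | x + y ∈ B} :=
    fun x => rfl
  simp_rw [hpre]
  have hinner_bind : ∀ x : Euc d,
      (ν₂.bind μ) {y | x + y ∈ B} = ∫⁻ s₂, μ s₂ {y | x + y ∈ B} ∂ν₂ :=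
    fun x => Measure.bind_apply (hsetx x) hm.aemeasurable
  simp_rw [hinner_bind]
  have hg : Measurable fun x : Euc d => ∫⁻ s₂, μ s₂ {y | x + y ∈ B} ∂ν₂ :=
    Measurable.lintegral_prod_right' hjoint
  rw [Measure.lintegral_bind hm.aemeasurable hg.aemeasurable]
  refine lintegral_congr_ae ?_
  filter_upwards [hae₁] with s₁ hs₁
  rw [lintegral_lintegral_swap hjoint.aemeasurable]
  refine lintegral_congr_ae ?_
  filter_upwards [hae₂] with s₂ hs₂
  have : ∫⁻ x, μ s₂ {y | x + y ∈ B} ∂(μ s₁)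
      = ((μ s₁).prod (μ s₂)) ((fun p : Euc d × Euc d => p.1 + p.2) ⁻¹' B) := by
    rw [Measure.prod_apply (measurable_addFun hB)]; rfl
  rw [this, ← mconv_apply _ _ hB, hsg s₁ hs₁ s₂ hs₂]

/-! ### Bind commutes with convolution powers -/

lemma bind_nconv {K : Set (Euc n)} (hK : IsCone K)
    {μ : Euc n → Measure (Euc d)} (hm : Measurable μ)
    (hp : ∀ s, IsProbabilityMeasure (μ s))
    (hsg : ∀ s₁ ∈ K, ∀ s₂ ∈ K, mconv (μ s₁) (μ s₂) = μ (s₁ + s₂))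
    {ν : Measure (Euc n)} [IsProbabilityMeasure ν] (hν : ν Kᶜ = 0) :
    ∀ j : ℕ, (nconv ν (j + 1)).bind μ = nconv (ν.bind μ) (j + 1) ∧
      nconv ν (j + 1) Kᶜ = 0
  | 0 => by
      have h1 : nconv ν 1 = ν := by rw [nconv, nconv, mconv_dirac]
      have hb : IsProbabilityMeasure (ν.bind μ) := bind_prob_s19 hm hp ν
      have h2 : nconv (ν.bind μ) 1 = ν.bind μ := by rw [nconv, nconv, mconv_dirac]
      rw [h1, h2]
      exact ⟨rfl, hν⟩
  | j + 1 => by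
      obtain ⟨ih1, ih2⟩ := bind_nconv hK hm hp hsg hν j
      have hprev : IsProbabilityMeasure (nconv ν (j + 1)) := nconv_prob ν (j + 1)
      constructor
      · rw [show nconv ν (j + 1 + 1) = mconv ν (nconv ν (j + 1)) from rfl,
          bind_mconv hK hm hp hsg hν ih2, ih1]
        rfl
      · exact mconv_null hK hν ih2

end Aux

/-- subordination of a K₂-parameter convolution semigroup by an infinitely
divisible probability measure supported on K₂ yields an infinitely divisible measure. -/
theorem subordination_by_ID_is_ID {N₂ d : ℕ} (K₂ : Set (Euc N₂)) (hK₂ : IsCone K₂)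
    (μ : Euc N₂ → Measure (Euc d)) (hμ : IsConvSemigroup K₂ μ) (hμm : Measurable μ)
    (ρ : Measure (Euc N₂)) [IsProbabilityMeasure ρ] (hρid : IsID ρ)
    (hsupp : ρ K₂ᶜ = 0) :
    IsID (ρ.bind μ) := by
  classical
  obtain ⟨hprob, hsg, -⟩ := hμ
  have hKm : MeasurableSet K₂ := hK₂.2.1.measurableSet
  -- Markov modification of μ
  set μ' : Euc N₂ → Measure (Euc d) := K₂.piecewise μ (fun _ => Measure.dirac 0) with hμ'def
  have hm' : Measurable μ' := Measurable.piecewise hKm hμm measurable_const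
  have hp' : ∀ s, IsProbabilityMeasure (μ' s) := by
    intro s
    by_cases hs : s ∈ K₂
    · rw [hμ'def, Set.piecewise_eq_of_mem _ _ _ hs]; exact hprob s hs
    · rw [hμ'def, Set.piecewise_eq_of_notMem _ _ _ hs]; infer_instance
  have hsg' : ∀ s₁ ∈ K₂, ∀ s₂ ∈ K₂, mconv (μ' s₁) (μ' s₂) = μ' (s₁ + s₂) := by
    intro s₁ h₁ s₂ h₂
    rw [hμ'def, Set.piecewise_eq_of_mem _ _ _ h₁, Set.piecewise_eq_of_mem _ _ _ h₂,
      Set.piecewise_eq_of_mem _ _ _ (cone_add hK₂ h₁ h₂)]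
    exact hsg s₁ h₁ s₂ h₂
  -- binding along μ and μ' agree for measures supported on K₂
  have hbind_eq : ∀ (ν : Measure (Euc N₂)), ν K₂ᶜ = 0 → ν.bind μ = ν.bind μ' := by
    intro ν hν
    have hae : ∀ᵐ s ∂ν, s ∈ K₂ := mem_ae_iff.mpr (by simpa using hν)
    ext B hB
    rw [Measure.bind_apply hB hμm.aemeasurable, Measure.bind_apply hB hm'.aemeasurable]
    refine lintegral_congr_ae ?_
    filter_upwards [hae] with s hs
    rw [hμ'def, Set.piecewise_eq_of_mem _ _ _ hs]
  intro k hk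
  obtain ⟨ν, hνp, hνk⟩ := hρid k hk
  have hνnull : ν K₂ᶜ = 0 := root_null hK₂ hk hνk hsupp
  obtain ⟨j, rfl⟩ : ∃ j, k = j + 1 := ⟨k - 1, (Nat.succ_pred_eq_of_pos hk).symm⟩
  refine ⟨ν.bind μ', bind_prob_s19 hm' hp' ν, ?_⟩
  have h1 := (bind_nconv hK₂ hm' hp' hsg' hνnull j).1
  rw [← h1, hνk, ← hbind_eq ρ hsupp]
end
end
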